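/- Let F = ∏_{s∈S} F_s / D be an ultraproduct of fields, and let L_s be a finite Galois extension of F_s of degree d (a fixed positive integer) for D-almost all s. Then the ultraproduct L = ∏_{s∈S} L_s / D is a Galois extension of degree d over F. -/

import Mathlib

open Polynomial

/-- `K` (with surjection `π` from the product) is the ultraproduct of the family `R`
with respect to the ultrafilter `D`. -/
def IsUltraproduct {S : Type*} {R : S → Type*} [∀ s, CommRing (R s)]
    {K : Type*} [CommRing K] (D : Ultrafilter S) (π : (∀ s, R s) →+* K) : Prop :=
  Function.Surjective π ∧ ∀ f g : ∀ s, R s, π f = π g ↔ {s | f s = g s} ∈ D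

lemma prod_getD_eq {R : Type*} [CommRing R] (ℓ : List R) (e : ℕ) (h : ℓ.length = e) :
    ∏ j : Fin e, (X - C (ℓ.getD j 0)) = (ℓ.map (fun a => X - C a)).prod := by
  subst h
  have : ∀ j : Fin ℓ.length, ℓ.getD (j : ℕ) 0 = ℓ.get j := fun j =>
    List.getD_eq_get ℓ 0 j
  calc ∏ j : Fin ℓ.length, (X - C (ℓ.getD j 0))
      = ∏ j : Fin ℓ.length, (X - C (ℓ.get j)) := by simp [this]
    _ = (List.ofFn (fun j : Fin ℓ.length => X - C (ℓ.get j))).prod := by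
        rw [List.prod_ofFn]
    _ = (ℓ.map (fun a => X - C a)).prod := by
        rw [show (fun j : Fin ℓ.length => X - C (ℓ.get j)) = (fun a => X - C a) ∘ ℓ.get
          from rfl, ← List.map_ofFn, List.ofFn_get]

theorem stmt_3 {S : Type*} [Infinite S] (D : Ultrafilter S) (hD : ∀ s : S, D ≠ pure s)
    (F L : S → Type*) [∀ s, Field (F s)] [∀ s, Field (L s)] [∀ s, Algebra (F s) (L s)]
    (K M : Type*) [Field K] [Field M] [Algebra K M]
    (πF : (∀ s, F s) →+* K) (πL : (∀ s, L s) →+* M)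
    (hF : IsUltraproduct D πF) (hL : IsUltraproduct D πL)
    (hcomp : ∀ f : ∀ s, F s,
      algebraMap K M (πF f) = πL fun s => algebraMap (F s) (L s) (f s))
    (d : ℕ) (hd : 0 < d)
    (hGal : {s | IsGalois (F s) (L s) ∧ Module.finrank (F s) (L s) = d} ∈ D) :
    IsGalois K M ∧ Module.finrank K M = d := by
  classical
  obtain ⟨hFsurj, hFker⟩ := hF
  obtain ⟨hLsurj, hLker⟩ := hL
  set T : Set S := {s | IsGalois (F s) (L s) ∧ Module.finrank (F s) (L s) = d} with hT
  -- basic ultraproduct facts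
  have hLzero : ∀ f : ∀ s, L s, πL f = 0 ↔ {s | f s = 0} ∈ D := by
    intro f
    rw [show (0 : M) = πL 0 from (map_zero πL).symm, hLker]
    rfl
  have hFzero : ∀ f : ∀ s, F s, πF f = 0 ↔ {s | f s = 0} ∈ D := by
    intro f
    rw [show (0 : K) = πF 0 from (map_zero πF).symm, hFker]
    rfl
  have hLsum : ∀ (n : ℕ) (h : Fin n → ∀ s, L s),
      πL (fun s => ∑ j, h j s) = ∑ j, πL (h j) := by
    intro n h
    rw [show (fun s => ∑ j, h j s) = ∑ j, h j from funext fun s => by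
      simp [Finset.sum_apply], map_sum]
  -- finite dimensionality on T
  have hfd : ∀ s ∈ T, FiniteDimensional (F s) (L s) := fun s hs =>
    FiniteDimensional.of_finrank_pos (hs.2 ▸ hd)
  -- Step 1: a basis of M over K of cardinality d
  have hbs : ∀ s ∈ T, Nonempty (Module.Basis (Fin d) (F s) (L s)) := fun s h => by
    haveI := hfd s h
    exact ⟨(Module.finBasis (F s) (L s)).reindex (finCongr h.2)⟩
  let β : ∀ p : {s // s ∈ T}, Module.Basis (Fin d) (F p.1) (L p.1) :=
    fun p => (hbs p.1 p.2).some
  set bs : ∀ s, Fin d → L s := fun s j =>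
    if h : s ∈ T then β ⟨s, h⟩ j else 0 with hbsdef
  set B : Fin d → M := fun j => πL (fun s => bs s j) with hBdef
  -- common computation
  have hcombo : ∀ cf : Fin d → ∀ s, F s,
      ∑ j, πF (cf j) • B j
        = πL (fun s => ∑ j, algebraMap (F s) (L s) (cf j s) * bs s j) := by
    intro cf
    rw [hLsum d (fun j s => algebraMap (F s) (L s) (cf j s) * bs s j)]
    refine Finset.sum_congr rfl fun j _ => ?_
    rw [Algebra.smul_def, hcomp, hBdef, ← map_mul]
    rfl
  have hbasis : ∃ b : Module.Basis (Fin d) K M, True := by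
    have hli : LinearIndependent K B := by
      rw [Fintype.linearIndependent_iff]
      intro c hc j
      choose cf hcf using fun j => hFsurj (c j)
      have h0 : πL (fun s => ∑ j, algebraMap (F s) (L s) (cf j s) * bs s j) = 0 := by
        rw [← hcombo]
        simpa [hcf] using hc
      rw [hLzero] at h0
      rw [← hcf j, hFzero]
      refine D.mem_of_superset (Filter.inter_mem h0 hGal) ?_
      rintro s ⟨hs0, hsT⟩
      have hz : ∑ i, cf i s • (β ⟨s, hsT⟩) i = 0 := by
        have : ∀ i : Fin d, algebraMap (F s) (L s) (cf i s) * bs s i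
            = cf i s • (β ⟨s, hsT⟩) i := fun i => by
          rw [hbsdef]; simp [hsT, Algebra.smul_def]
        rw [← Finset.sum_congr rfl fun i _ => this i]
        exact hs0
      exact Fintype.linearIndependent_iff.mp (β ⟨s, hsT⟩).linearIndependent _ hz j
    have hspan : ⊤ ≤ Submodule.span K (Set.range B) := by
      intro x _
      obtain ⟨g, hg⟩ := hLsurj x
      rw [Submodule.mem_span_range_iff_exists_fun K]
      set cf : Fin d → ∀ s, F s := fun j s =>
        if h : s ∈ T then (β ⟨s, h⟩).repr (g s) j else 0 with hcfdef
      refine ⟨fun j => πF (cf j), ?_⟩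
      rw [hcombo, ← hg]
      rw [hLker]
      refine D.mem_of_superset hGal fun s hsT => ?_
      show ∑ j, algebraMap (F s) (L s) (cf j s) * bs s j = g s
      have : ∀ j : Fin d, algebraMap (F s) (L s) (cf j s) * bs s j
          = (β ⟨s, hsT⟩).repr (g s) j • (β ⟨s, hsT⟩) j := fun j => by
        rw [hcfdef, hbsdef]; simp [hsT, Algebra.smul_def]
      rw [Finset.sum_congr rfl fun j _ => this j]
      exact (β ⟨s, hsT⟩).sum_repr (g s)
    exact ⟨Module.Basis.mk hli hspan, trivial⟩
  obtain ⟨b, -⟩ := hbasis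
  have hrank : Module.finrank K M = d := by
    rw [Module.finrank_eq_card_basis b, Fintype.card_fin]
  haveI hMfd : FiniteDimensional K M := FiniteDimensional.of_finrank_pos (hrank ▸ hd)
  -- Step 2: every element has separable minimal polynomial that splits
  have key : ∀ x : M, (minpoly K x).Separable ∧ Splits ((minpoly K x).map (algebraMap K M)) := by
    intro x
    obtain ⟨g, hg⟩ := hLsurj x
    set m : ∀ s, (F s)[X] := fun s => minpoly (F s) (g s) with hm
    have hint : ∀ s ∈ T, IsIntegral (F s) (g s) := by
      intro s hs
      haveI := hfd s hs
      exact IsIntegral.of_finite _ _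
    have hmonic : ∀ s ∈ T, (m s).Monic := fun s hs => minpoly.monic (hint s hs)
    have hsep : ∀ s ∈ T, (m s).Separable := by
      intro s hs
      haveI := hs.1
      exact Algebra.IsSeparable.isSeparable (F s) (g s)
    have hsplits : ∀ s ∈ T, Splits ((m s).map (algebraMap (F s) (L s))) := by
      intro s hs
      haveI := hs.1
      exact Normal.splits inferInstance (g s)
    have hdeg : ∀ s ∈ T, (m s).natDegree ∈ Finset.Icc 1 d := by
      intro s hs
      haveI := hfd s hs
      exact Finset.mem_Icc.mpr
        ⟨minpoly.natDegree_pos (hint s hs), hs.2 ▸ minpoly.natDegree_le (g s)⟩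
    obtain ⟨e, heIcc, hTe⟩ : ∃ e ∈ (Finset.Icc 1 d : Finset ℕ),
        (T ∩ {s | (m s).natDegree = e}) ∈ D := by
      have hun : (⋃ e ∈ ((Finset.Icc 1 d : Finset ℕ) : Set ℕ),
          (T ∩ {s | (m s).natDegree = e})) ∈ D :=
        D.mem_of_superset hGal fun s hs => Set.mem_biUnion (hdeg s hs) ⟨hs, rfl⟩
      obtain ⟨e, he, h⟩ :=
        (Ultrafilter.finite_biUnion_mem_iff (Finset.finite_toSet _)).mp hun
      exact ⟨e, he, h⟩
    set Te : Set S := T ∩ {s | (m s).natDegree = e} with hTedef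
    -- the list of roots
    set ℓ : ∀ s, List (L s) :=
      fun s => ((m s).map (algebraMap (F s) (L s))).roots.toList with hℓ
    have hlen : ∀ s ∈ Te, (ℓ s).length = e := by
      rintro s ⟨hsT, hse⟩
      rw [hℓ, Multiset.length_toList]
      rw [splits_iff_card_roots.mp (hsplits s hsT)]
      rw [natDegree_map]
      exact hse
    set r : Fin e → ∀ s, L s := fun j s => (ℓ s).getD j 0 with hr
    set R : Fin e → M := fun j => πL (r j) with hR
    set c : ℕ → ∀ s, F s := fun i s => (m s).coeff i with hc
    set q : ℕ → K := fun i => πF (c i) with hq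
    set Q : K[X] := ∑ i ∈ Finset.range (e + 1), C (q i) * X ^ i with hQ
    have hQcoeff : ∀ i, Q.coeff i = if i ≤ e then q i else 0 := by
      intro i
      rw [hQ, finset_sum_coeff]
      simp only [coeff_C_mul, coeff_X_pow, mul_ite, mul_one, mul_zero]
      rw [Finset.sum_ite_eq (Finset.range (e + 1)) i q]
      simp [Nat.lt_succ_iff]
    have hQe : Q.coeff e = 1 := by
      rw [hQcoeff, if_pos le_rfl, hq, show (1 : K) = πF 1 from (map_one πF).symm, hFker]
      refine D.mem_of_superset hTe ?_
      rintro s ⟨hsT, hse⟩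
      show (m s).coeff e = 1
      rw [← hse]
      exact hmonic s hsT
    have hQndle : Q.natDegree ≤ e := by
      refine natDegree_le_iff_coeff_eq_zero.mpr fun i hi => ?_
      rw [hQcoeff, if_neg (by omega)]
    have hQnd : Q.natDegree = e :=
      le_antisymm hQndle (le_natDegree_of_ne_zero (hQe ▸ one_ne_zero))
    have hQmonic : Q.Monic := by
      rw [Monic, leadingCoeff, hQnd, hQe]
    -- evaluation of Q at x is zero
    have haeval : aeval x Q = 0 := by
      have h1 : aeval x Q = ∑ i : Fin (e + 1),
          algebraMap K M (q i) * x ^ (i : ℕ) := by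
        rw [hQ, map_sum, ← Fin.sum_univ_eq_sum_range
          (fun i => (aeval x) (C (q i) * X ^ i)) (e + 1)]
        refine Finset.sum_congr rfl fun i _ => ?_
        rw [map_mul, aeval_C, map_pow, aeval_X]
      rw [h1]
      have h2 : ∀ i : Fin (e + 1), algebraMap K M (q i) * x ^ (i : ℕ)
          = πL (fun s => algebraMap (F s) (L s) (c i s) * g s ^ (i : ℕ)) := by
        intro i
        rw [hq, hcomp, ← hg, ← map_pow, ← map_mul]
        rfl
      rw [Finset.sum_congr rfl fun i _ => h2 i,
        ← hLsum (e + 1) (fun i s => algebraMap (F s) (L s) (c i s) * g s ^ (i : ℕ)),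
        hLzero]
      refine D.mem_of_superset hTe ?_
      rintro s ⟨hsT, hse⟩
      show ∑ i : Fin (e + 1), algebraMap (F s) (L s) ((m s).coeff i) * g s ^ (i : ℕ) = 0
      have hse2 : (m s).natDegree = e := hse
      have := aeval_eq_sum_range' (p := m s)
        (n := e + 1) (by omega : (m s).natDegree < e + 1) (g s)
      rw [minpoly.aeval] at this
      rw [Fin.sum_univ_eq_sum_range
        (fun i => algebraMap (F s) (L s) ((m s).coeff i) * g s ^ i) (e + 1)]
      rw [← this.symm]
      exact (Finset.sum_congr rfl fun i _ => by rw [Algebra.smul_def]).symm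
    -- coefficients of the product polynomial over the product ring
    set P : (∀ s, L s)[X] := ∏ j : Fin e, (X - C (r j)) with hP
    have hPcoeff : ∀ (i : ℕ), ∀ s ∈ Te, (P.coeff i) s
        = algebraMap (F s) (L s) ((m s).coeff i) := by
      rintro i s hs
      have h1 : (P.coeff i) s = (P.map (Pi.evalRingHom L s)).coeff i := by
        rw [coeff_map]
        rfl
      have h2 : P.map (Pi.evalRingHom L s) = ∏ j : Fin e, (X - C (r j s)) := by
        rw [hP, Polynomial.map_prod]
        exact Finset.prod_congr rfl fun j _ => by
          rw [Polynomial.map_sub, map_X, map_C]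
          rfl
      have h3 : ∏ j : Fin e, (X - C (r j s)) = (m s).map (algebraMap (F s) (L s)) := by
        rw [show (fun j : Fin e => X - C (r j s))
            = fun j : Fin e => X - C ((ℓ s).getD j 0) from rfl]
        rw [prod_getD_eq (ℓ s) e (hlen s hs)]
        rw [hℓ]
        rw [show (((m s).map (algebraMap (F s) (L s))).roots.toList.map
            fun a => X - C a).prod
          = (Multiset.map (fun a => X - C a)
              ((m s).map (algebraMap (F s) (L s))).roots).prod from by
          rw [← Multiset.coe_toList ((m s).map (algebraMap (F s) (L s))).roots,
            Multiset.map_coe, Multiset.prod_coe, Multiset.coe_toList]]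
        exact ((hsplits s hs.1).eq_prod_roots_of_monic ((hmonic s hs.1).map _)).symm
      rw [h1, h2, h3, coeff_map]
    -- Q maps to the split product
    have hmapQ : Q.map (algebraMap K M) = ∏ j : Fin e, (X - C (R j)) := by
      have hPmap : ∏ j : Fin e, (X - C (R j)) = P.map πL := by
        rw [hP, Polynomial.map_prod]
        exact Finset.prod_congr rfl fun j _ => by
          rw [Polynomial.map_sub, map_X, map_C, hR]
      rw [hPmap]
      ext i
      rw [coeff_map, coeff_map, hQcoeff]
      by_cases hi : i ≤ e
      · rw [if_pos hi, hq, hcomp, hLker]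
        refine D.mem_of_superset hTe fun s hs => ?_
        exact (hPcoeff i s hs).symm
      · rw [if_neg hi, map_zero, eq_comm, hLzero]
        refine D.mem_of_superset hTe fun s hs => ?_
        show (P.coeff i) s = 0
        have hse2 : (m s).natDegree = e := hs.2
        rw [hPcoeff i s hs, coeff_eq_zero_of_natDegree_lt (by omega), map_zero]
    -- R is injective
    have hRinj : Function.Injective R := by
      intro j j' hjj
      rw [hR] at hjj
      have hmem := (hLker _ _).mp hjj
      obtain ⟨s, hsE, hsTe⟩ := Ultrafilter.nonempty_of_mem (Filter.inter_mem hmem hTe)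
      have hnodup : (ℓ s).Nodup := by
        have : (((m s).map (algebraMap (F s) (L s))).roots).Nodup :=
          nodup_roots ((hsep s hsTe.1).map)
        rw [hℓ]
        rw [← Multiset.coe_nodup, Multiset.coe_toList]
        exact this
      have hlt : (j : ℕ) < (ℓ s).length := (hlen s hsTe) ▸ j.isLt
      have hlt' : (j' : ℕ) < (ℓ s).length := (hlen s hsTe) ▸ j'.isLt
      have : (ℓ s).get ⟨j, hlt⟩ = (ℓ s).get ⟨j', hlt'⟩ := by
        have h1 : (ℓ s).getD (↑j) 0 = (ℓ s).getD (↑j') 0 := hsE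
        rwa [List.getD_eq_getElem _ _ hlt, List.getD_eq_getElem _ _ hlt'] at h1
      have := (List.Nodup.get_inj_iff hnodup).mp this
      exact Fin.ext (by simpa using congrArg Fin.val this)
    -- conclusion
    have hQsplits : Splits (Q.map (algebraMap K M)) := by
      rw [hmapQ]
      exact Splits.prod fun j _ => Splits.X_sub_C _
    have hQsep : Q.Separable := by
      rw [← separable_map (algebraMap K M), hmapQ]
      exact separable_prod_X_sub_C_iff.mpr hRinj
    have hdvd : minpoly K x ∣ Q := minpoly.dvd K x haeval
    exact ⟨hQsep.of_dvd hdvd,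
      hQsplits.of_dvd (hQmonic.map _).ne_zero (Polynomial.map_dvd _ hdvd)⟩
  haveI : Algebra.IsSeparable K M := ⟨fun x => (key x).1⟩
  haveI : Normal K M := normal_iff.mpr fun x => ⟨IsIntegral.of_finite K x, (key x).2⟩
  exact ⟨⟨⟩, hrank⟩
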